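/- Let $G(r,t) = (4\pi t)^{-3/2} e^{-t} \frac{r}{\sinh r} e^{-r^2/(4t)}$. Then $\int_0^\infty 4\pi (\sinh r)^2\, \big| G(r,t+1) - G(r,t) \big|\, dr \to 0$ as $t \to \infty$; i.e., the fundamental solution of the heat equation on $\mathbb{H}^3$ and its time-delayed version $G(r,t+1)$ converge to each other in $L^1(\mathbb{H}^3)$ as $t \to \infty$. -/

import Mathlib

open Real Filter MeasureTheory

/-- The fundamental solution of the heat equation on `ℍ³` in geodesic polar
coordinates: `G(r,t) = (4πt)^(-3/2) e^{-t} (r / sinh r) e^{-r²/(4t)}`. -/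
noncomputable def hypHeatKernel (r t : ℝ) : ℝ :=
  (4 * π * t) ^ (-(3 : ℝ) / 2) * Real.exp (-t) * (r / Real.sinh r) *
    Real.exp (-r ^ 2 / (4 * t))

open Set in
/-- Gaussian-polynomial majorant. -/
noncomputable def gp (s α β γ x : ℝ) : ℝ := (α + β*x^2 + γ*x^4) * exp (-x^2/(4*s))

section auxiliary
open Set
lemma rpow_neg_three_div_two {x : ℝ} (hx : 0 < x) : x ^ (-(3:ℝ)/2) = 1/(x*√x) := by
  rw [show -(3:ℝ)/2 = -(1 + 1/2) by norm_num, Real.rpow_neg hx.le, Real.rpow_add hx,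
    Real.rpow_one, ← Real.sqrt_eq_rpow]
  rw [one_div]

lemma rpow_neg_five_div_two {x : ℝ} (hx : 0 < x) : x ^ (-(5:ℝ)/2) = 1/(x^2*√x) := by
  rw [show -(5:ℝ)/2 = -(2 + 1/2) by norm_num, Real.rpow_neg hx.le, Real.rpow_add hx,
    ← Real.sqrt_eq_rpow, show (2:ℝ) = ((2:ℕ):ℝ) by norm_num, Real.rpow_natCast]
  rw [one_div]

lemma sqrt_four_mul {s : ℝ} (hs : 0 ≤ s) : √(4*s) = 2*√s := by
  rw [Real.sqrt_mul (by norm_num) s, show (4:ℝ) = 2^2 by norm_num, Real.sqrt_sq (by norm_num)]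

lemma gauss_J0 {s : ℝ} (hs : 0 < s) : ∫ x : ℝ, exp (-x^2/(4*s)) = 2*√π*√s := by
  have h : ∀ x : ℝ, -x^2/(4*s) = -(1/(4*s)) * x^2 := fun x => by ring
  simp_rw [h, integral_gaussian]
  rw [div_div_eq_mul_div, div_one, show π * (4*s) = 4*(π*s) by ring,
    sqrt_four_mul (by positivity), Real.sqrt_mul pi_nonneg s]
  ring

lemma inv_four_s_rpow_3half {s : ℝ} (hs : 0 < s) : (1/(4*s)) ^ (-(3:ℝ)/2) = 8*(s*√s) := by
  have hsq : √(1/(4*s)) = 1/(2*√s) := by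
    rw [one_div, Real.sqrt_inv, sqrt_four_mul hs.le, one_div]
  rw [rpow_neg_three_div_two (by positivity), hsq]
  have h0 : √s ≠ 0 := by positivity
  field_simp
  ring

lemma inv_four_s_rpow_5half {s : ℝ} (hs : 0 < s) : (1/(4*s)) ^ (-(5:ℝ)/2) = 32*(s^2*√s) := by
  have hsq : √(1/(4*s)) = 1/(2*√s) := by
    rw [one_div, Real.sqrt_inv, sqrt_four_mul hs.le, one_div]
  rw [rpow_neg_five_div_two (by positivity), hsq]
  have h0 : √s ≠ 0 := by positivity
  field_simp
  ring

lemma gauss_int (n : ℕ) {s : ℝ} (hs : 0 < s) :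
    Integrable (fun x : ℝ => x^n * exp (-x^2/(4*s))) := by
  have hn : (-1:ℝ) < (n:ℝ) := lt_of_lt_of_le neg_one_lt_zero (Nat.cast_nonneg n)
  have h := integrable_rpow_mul_exp_neg_mul_sq (b := 1/(4*s)) (by positivity) hn
  have he : (fun x:ℝ => x ^ ((n:ℝ)) * exp (-(1/(4*s)) * x^2))
      = fun x => x^n * exp (-x^2/(4*s)) := by
    funext x
    rw [Real.rpow_natCast, show -(1/(4*s))*x^2 = -x^2/(4*s) by ring]
  rwa [he] at h

lemma gauss_J2 {s : ℝ} (hs : 0 < s) : ∫ x : ℝ, x^2 * exp (-x^2/(4*s)) = 4*√π*(s*√s) := by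
  have h1 : (fun x : ℝ => x^2 * exp (-x^2/(4*s)))
      = fun x : ℝ => |x|^2 * exp (-|x|^2/(4*s)) := by
    funext x; rw [sq_abs]
  rw [h1, integral_comp_abs (f := fun y : ℝ => y^2 * exp (-y^2/(4*s)))]
  have key := integral_rpow_mul_exp_neg_mul_rpow (p := 2) (q := 2) (b := 1/(4*s))
    two_pos (by norm_num) (by positivity)
  have hconv : ∀ x ∈ Ioi (0:ℝ), x ^ (2:ℝ) * exp (-(1/(4*s)) * x ^ (2:ℝ))
      = x^2 * exp (-x^2/(4*s)) := by
    intro x _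
    have e2 : x ^ (2:ℝ) = x^(2:ℕ) := by
      rw [show (2:ℝ) = ((2:ℕ):ℝ) by norm_num, Real.rpow_natCast]
    rw [e2, show -(1/(4*s))*x^(2:ℕ) = -x^(2:ℕ)/(4*s) by ring]
  rw [setIntegral_congr_fun measurableSet_Ioi hconv] at key
  rw [key, show (2+1)/(2:ℝ) = 1/2 + 1 by norm_num, Real.Gamma_add_one (by norm_num),
    Real.Gamma_one_half_eq, show -(2+1)/(2:ℝ) = -(3:ℝ)/2 by norm_num,
    inv_four_s_rpow_3half hs]
  ring

lemma gauss_J4 {s : ℝ} (hs : 0 < s) : ∫ x : ℝ, x^4 * exp (-x^2/(4*s)) = 24*√π*(s^2*√s) := by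
  have h1 : (fun x : ℝ => x^4 * exp (-x^2/(4*s)))
      = fun x : ℝ => |x|^4 * exp (-|x|^2/(4*s)) := by
    funext x; rw [sq_abs, pow_abs, abs_of_nonneg (by positivity : (0:ℝ) ≤ x^4)]
  rw [h1, integral_comp_abs (f := fun y : ℝ => y^4 * exp (-y^2/(4*s)))]
  have key := integral_rpow_mul_exp_neg_mul_rpow (p := 2) (q := 4) (b := 1/(4*s))
    two_pos (by norm_num) (by positivity)
  have hconv : ∀ x ∈ Ioi (0:ℝ), x ^ (4:ℝ) * exp (-(1/(4*s)) * x ^ (2:ℝ))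
      = x^4 * exp (-x^2/(4*s)) := by
    intro x _
    have e2 : x ^ (2:ℝ) = x^(2:ℕ) := by
      rw [show (2:ℝ) = ((2:ℕ):ℝ) by norm_num, Real.rpow_natCast]
    have e4 : x ^ (4:ℝ) = x^(4:ℕ) := by
      rw [show (4:ℝ) = ((4:ℕ):ℝ) by norm_num, Real.rpow_natCast]
    rw [e2, e4, show -(1/(4*s))*x^(2:ℕ) = -x^(2:ℕ)/(4*s) by ring]
  rw [setIntegral_congr_fun measurableSet_Ioi hconv] at key
  rw [key, show (4+1)/(2:ℝ) = (1/2 + 1) + 1 by norm_num, Real.Gamma_add_one (by norm_num),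
    Real.Gamma_add_one (by norm_num), Real.Gamma_one_half_eq,
    show -(4+1)/(2:ℝ) = -(5:ℝ)/2 by norm_num, inv_four_s_rpow_5half hs]
  ring

/-- Gaussian-polynomial majorant. -/
lemma gp_nonneg {s α β γ : ℝ} (hα : 0 ≤ α) (hβ : 0 ≤ β) (hγ : 0 ≤ γ) (x : ℝ) :
    0 ≤ gp s α β γ x := by
  unfold gp; positivity

lemma gp_eq (s α β γ : ℝ) : gp s α β γ = fun x =>
    α * exp (-x^2/(4*s)) + β * (x^2 * exp (-x^2/(4*s))) + γ * (x^4 * exp (-x^2/(4*s))) := by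
  funext x; unfold gp; ring

lemma gp_integrable {s : ℝ} (hs : 0 < s) (α β γ : ℝ) : Integrable (gp s α β γ) := by
  rw [gp_eq]
  have h0 : Integrable (fun x : ℝ => exp (-x^2/(4*s))) := by
    have := gauss_int 0 hs; simpa using this
  exact (((h0.const_mul α).add ((gauss_int 2 hs).const_mul β)).add
    ((gauss_int 4 hs).const_mul γ))

lemma gp_integral {s : ℝ} (hs : 0 < s) (α β γ : ℝ) :
    ∫ x : ℝ, gp s α β γ x = √π*√s*(2*α + 4*β*s + 24*γ*s^2) := by
  rw [gp_eq]
  have h0 : Integrable (fun x : ℝ => exp (-x^2/(4*s))) := by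
    have := gauss_int 0 hs; simpa using this
  have e1 := integral_add (μ := volume)
    (f := fun x : ℝ => α * exp (-x^2/(4*s)) + β * (x^2 * exp (-x^2/(4*s))))
    (g := fun x : ℝ => γ * (x^4 * exp (-x^2/(4*s))))
    ((h0.const_mul α).add ((gauss_int 2 hs).const_mul β)) ((gauss_int 4 hs).const_mul γ)
  have e2 := integral_add (μ := volume)
    (f := fun x : ℝ => α * exp (-x^2/(4*s)))
    (g := fun x : ℝ => β * (x^2 * exp (-x^2/(4*s))))
    (h0.const_mul α) ((gauss_int 2 hs).const_mul β)
  rw [e1, e2,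
    integral_const_mul, integral_const_mul, integral_const_mul,
    gauss_J0 hs, gauss_J2 hs, gauss_J4 hs]
  have h : √s*√s = s := Real.mul_self_sqrt hs.le
  nlinarith [Real.sqrt_nonneg π, Real.sqrt_nonneg s, sq_nonneg (√s)]

lemma gp_integral_shift {s : ℝ} (hs : 0 < s) (α β γ a : ℝ) :
    ∫ x : ℝ, gp s α β γ (x - a) = √π*√s*(2*α + 4*β*s + 24*γ*s^2) := by
  rw [integral_sub_right_eq_self (gp s α β γ) a, gp_integral hs]

lemma gp_integrable_shift {s : ℝ} (hs : 0 < s) (α β γ a : ℝ) :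
    Integrable (fun x => gp s α β γ (x - a)) :=
  (gp_integrable hs α β γ).comp_sub_right a

lemma abs_exp_sub_one_le (y : ℝ) : |exp y - 1| ≤ |y| * (exp y + 1) := by
  rcases le_or_gt 0 y with hy | hy
  · rw [abs_of_nonneg (by nlinarith [Real.add_one_le_exp y] : (0:ℝ) ≤ exp y - 1),
      abs_of_nonneg hy]
    have h1 : 1 - y ≤ exp (-y) := by nlinarith [Real.add_one_le_exp (-y)]
    rw [Real.exp_neg] at h1
    have h2 : 0 < exp y := Real.exp_pos y
    nlinarith [mul_le_mul_of_nonneg_right h1 h2.le, mul_inv_cancel₀ h2.ne']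
  · rw [abs_of_nonpos (sub_nonpos.2 (Real.exp_le_one_iff.mpr hy.le)), abs_of_neg hy]
    nlinarith [Real.add_one_le_exp y, Real.exp_pos y]

lemma poly_bound {u v : ℝ} (hu : 0 ≤ u) (hv : 1 ≤ v) :
    2*v*((2*v^2+u)*((4*v^2+u+2)*(u+2))) ≤ 76*v^6 + 52*v^4*u^2 + u^4 := by
  have hv0 : 0 < v := lt_of_lt_of_le one_pos hv
  have hA : 0 ≤ (8*v^4+16*v^2+4) * (u^2+v^2-2*u*v) := by
    apply mul_nonneg (by positivity)
    nlinarith [sq_nonneg (u-v)]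
  have hB : 0 ≤ u^2 * (u^2+v^2-2*u*v) := by
    apply mul_nonneg (by positivity)
    nlinarith [sq_nonneg (u-v)]
  have h2 : v^2 ≤ v^6 := pow_le_pow_right₀ hv (by norm_num)
  have h3 : v^3 ≤ v^6 := pow_le_pow_right₀ hv (by norm_num)
  have h4 : v^4 ≤ v^6 := pow_le_pow_right₀ hv (by norm_num)
  have h5 : v^5 ≤ v^6 := pow_le_pow_right₀ hv (by norm_num)
  have h1 : v ≤ v^4 := by
    have := pow_le_pow_right₀ hv (by norm_num : 1 ≤ 4); simpa using this
  have h2' : v^2 ≤ v^4 := pow_le_pow_right₀ hv (by norm_num)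
  have h3' : v^3 ≤ v^4 := pow_le_pow_right₀ hv (by norm_num)
  have h0 : 1 ≤ v^4 := le_trans hv h1
  have hu2 : 0 ≤ u^2 := sq_nonneg u
  nlinarith [hA, hB, mul_le_mul_of_nonneg_left h1 hu2, mul_le_mul_of_nonneg_left h2' hu2,
    mul_le_mul_of_nonneg_left h3' hu2, mul_le_mul_of_nonneg_left h0 hu2]

lemma w_bound {t s r : ℝ} (ht : 1 ≤ t) (hts : t ≤ s) (hst : s ≤ t+1) (hr : 0 < r) :
    (r/2) * |r^2 - 4*(t*(t+1))| ≤
      19*s^2*√s + 13*s*√s*(r-2*s)^2 + 1/(4*√s)*(r-2*s)^4 := by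
  have hs1 : 1 ≤ s := le_trans ht hts
  have hs0 : 0 < s := by linarith
  have ht0 : 0 < t := by linarith
  set v := √s with hv_def
  set x := r - 2*s with hx_def
  set u := |x| with hu_def
  have hv1 : 1 ≤ v := by
    rw [hv_def, show (1:ℝ) = √1 by simp]
    exact Real.sqrt_le_sqrt hs1
  have hv0 : 0 < v := lt_of_lt_of_le one_pos hv1
  have hvv : v*v = s := Real.mul_self_sqrt hs0.le
  set c := 2*√(t*(t+1)) with hc
  have hc2 : c^2 = 4*(t*(t+1)) := by
    rw [hc, mul_pow, Real.sq_sqrt (by positivity)]; ring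
  have hclb : 2*t ≤ c := by
    have h := Real.sqrt_le_sqrt (show t*t ≤ t*(t+1) by nlinarith)
    rw [Real.sqrt_mul_self ht0.le] at h
    rw [hc]; linarith
  have hcub : c ≤ 2*(t+1) := by
    have h := Real.sqrt_le_sqrt (show t*(t+1) ≤ (t+1)*(t+1) by nlinarith)
    rw [Real.sqrt_mul_self (by linarith : (0:ℝ) ≤ t+1)] at h
    rw [hc]; linarith
  have hc0 : (0:ℝ) ≤ c := by positivity
  have hu0 : 0 ≤ u := abs_nonneg x
  have habs : |r - c| ≤ u + 2 := by
    have h1 : |r - c| ≤ |r - 2*s| + |2*s - c| := abs_sub_le r (2*s) c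
    have h2 : |2*s - c| ≤ 2 := abs_le.2 ⟨by linarith, by linarith⟩
    rw [hu_def, hx_def]; linarith
  have hru : r ≤ 2*s + u := by
    have := le_abs_self x
    rw [hu_def]; rw [hx_def] at this ⊢; linarith
  have hfac : |r^2 - 4*(t*(t+1))| = (r+c)*|r-c| := by
    rw [← hc2, show r^2 - c^2 = (r+c)*(r-c) by ring, abs_mul,
      abs_of_nonneg (by linarith : (0:ℝ) ≤ r+c)]
  have step1 : (r/2)*((r+c)*|r-c|) ≤ (1/2)*((2*s+u)*((4*s+2+u)*(u+2))) := by
    have hrc : r + c ≤ 4*s+2+u := by linarith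
    calc (r/2)*((r+c)*|r-c|) ≤ (r/2)*((4*s+2+u)*(u+2)) := by
          apply mul_le_mul_of_nonneg_left _ (by positivity)
          exact mul_le_mul hrc habs (abs_nonneg _) (by linarith)
      _ ≤ ((2*s+u)/2)*((4*s+2+u)*(u+2)) := by
          apply mul_le_mul_of_nonneg_right (by linarith)
          exact mul_nonneg (by linarith) (by linarith)
      _ = (1/2)*((2*s+u)*((4*s+2+u)*(u+2))) := by ring
  have step2 : (1/2)*((2*s+u)*((4*s+2+u)*(u+2))) ≤ 19*v^5 + 13*v^3*u^2 + 1/(4*v)*u^4 := by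
    have hp := poly_bound hu0 hv1
    have h4v : (0:ℝ) < 4*v := by positivity
    rw [← mul_le_mul_iff_of_pos_right h4v]
    have hx4 : 1/(4*v)*u^4*(4*v) = u^4 := by field_simp
    have hs_eq : s = v^2 := by rw [← hvv]; ring
    rw [hs_eq]
    nlinarith [hp, hx4]
  have hfin : 19*v^5 + 13*v^3*u^2 + 1/(4*v)*u^4
      = 19*s^2*√s + 13*s*√s*x^2 + 1/(4*√s)*x^4 := by
    have hu2 : u^2 = x^2 := sq_abs x
    have hu4 : u^4 = x^4 := by
      rw [show u^4 = (u^2)^2 by ring, hu2]; ring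
    rw [hu2, hu4, ← hv_def, ← hvv]; ring
  calc (r/2) * |r^2 - 4*(t*(t+1))| = (r/2)*((r+c)*|r-c|) := by rw [hfac]
    _ ≤ (1/2)*((2*s+u)*((4*s+2+u)*(u+2))) := step1
    _ ≤ 19*v^5 + 13*v^3*u^2 + 1/(4*v)*u^4 := step2
    _ = _ := hfin

lemma half_r_bound {s r : ℝ} (hs1 : 1 ≤ s) (hr : 0 < r) :
    r/2 ≤ 2*s + 1/(4*√s)*(r-2*s)^2 := by
  have hs0 : 0 < s := by linarith
  set v := √s with hv_def
  have hv1 : 1 ≤ v := by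
    rw [hv_def, show (1:ℝ) = √1 by simp]; exact Real.sqrt_le_sqrt hs1
  have hv0 : 0 < v := lt_of_lt_of_le one_pos hv1
  have hvv : v*v = s := Real.mul_self_sqrt hs0.le
  set x := r - 2*s with hx_def
  have h4v : (0:ℝ) < 4*v := by positivity
  rw [← mul_le_mul_iff_of_pos_right h4v]
  have hx4 : 1/(4*v)*x^2*(4*v) = x^2 := by field_simp
  nlinarith [sq_nonneg (x - v), hx4, hvv, hv1, hv0]

set_option maxHeartbeats 1000000 in
lemma pointwise_main {t r : ℝ} (ht : 1 ≤ t) (hr : 0 < r) :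
    4*π*(Real.sinh r)^2 * |hypHeatKernel r (t+1) - hypHeatKernel r t| ≤
      (3/t) * (4*π*(4*π*(t+1))^(-(3:ℝ)/2)) *
        gp (t+1) (2*(t+1)) (1/(4*√(t+1))) 0 (r - 2*(t+1))
      + (4*π*(4*π*(t+1))^(-(3:ℝ)/2))/(t*(t+1)) *
        gp (t+1) (19*(t+1)^2*√(t+1)) (13*(t+1)*√(t+1)) (1/(4*√(t+1))) (r - 2*(t+1))
      + (4*π*(4*π*t)^(-(3:ℝ)/2))/(4*(t*(t+1))) *
        gp t (19*t^2*√t) (13*t*√t) (1/(4*√t)) (r - 2*t) := by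
  have ht0 : (0:ℝ) < t := by linarith
  have hs0 : (0:ℝ) < t+1 := by linarith
  have hπ : (0:ℝ) < π := Real.pi_pos
  have hsinh : 0 < Real.sinh r := Real.sinh_pos_iff.2 hr
  set P : ℝ := 4*π*(r*Real.sinh r) with hP_def
  have hP0 : 0 < P := by rw [hP_def]; positivity
  set D : ℝ → ℝ := fun s => (4*π*s) ^ (-(3:ℝ)/2) * (exp (-s) * exp (-r^2/(4*s)))
    with hD_def
  have hD0 : ∀ s, 0 < s → 0 < D s := by
    intro s hs; rw [hD_def]; simp only
    have := Real.rpow_pos_of_pos (show (0:ℝ) < 4*π*s by positivity) (-(3:ℝ)/2)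
    positivity
  -- rewrite LHS
  have h_eq : ∀ s, 0 < s → 4*π*(Real.sinh r)^2 * hypHeatKernel r s = P * D s := by
    intro s hs
    rw [hP_def, hD_def]; simp only
    unfold hypHeatKernel
    have hsne : Real.sinh r ≠ 0 := ne_of_gt hsinh
    field_simp
  have hLHS : 4*π*(Real.sinh r)^2 * |hypHeatKernel r (t+1) - hypHeatKernel r t|
      = |P * D (t+1) - P * D t| := by
    rw [← abs_of_nonneg (show (0:ℝ) ≤ 4*π*(Real.sinh r)^2 by positivity), ← abs_mul,
      mul_sub, h_eq (t+1) hs0, h_eq t ht0]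
  rw [hLHS]
  -- ratio identity
  set A : ℝ := (t*√t)/((t+1)*√(t+1)) with hA_def
  set y : ℝ := r^2/(4*(t*(t+1))) - 1 with hy_def
  have hst0 : (0:ℝ) < √t := Real.sqrt_pos.2 ht0
  have hst1 : (0:ℝ) < √(t+1) := Real.sqrt_pos.2 hs0
  have hratio : D (t+1) = A * exp y * D t := by
    rw [hD_def]; simp only
    rw [rpow_neg_three_div_two (show (0:ℝ) < 4*π*(t+1) by positivity),
      rpow_neg_three_div_two (show (0:ℝ) < 4*π*t by positivity)]
    have hsq1 : √(4*π*(t+1)) = √(4*π)*√(t+1) := Real.sqrt_mul (by positivity) _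
    have hsq0 : √(4*π*t) = √(4*π)*√t := Real.sqrt_mul (by positivity) _
    have hexp : exp (-(t+1)) * exp (-r^2/(4*(t+1)))
        = exp y * (exp (-t) * exp (-r^2/(4*t))) := by
      rw [← Real.exp_add, ← Real.exp_add, ← Real.exp_add]
      congr 1
      rw [hy_def]
      field_simp
      ring
    have h4π : (0:ℝ) < √(4*π) := Real.sqrt_pos.2 (by positivity)
    rw [hsq1, hsq0]
    calc 1/(4*π*(t+1)*(√(4*π)*√(t+1))) * (exp (-(t+1)) * exp (-r^2/(4*(t+1))))
        = 1/(4*π*(t+1)*(√(4*π)*√(t+1))) * (exp y * (exp (-t) * exp (-r^2/(4*t)))) := by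
          rw [hexp]
      _ = A * exp y * (1/(4*π*t*(√(4*π)*√t)) * (exp (-t) * exp (-r^2/(4*t)))) := by
          rw [hA_def]
          field_simp
  have hA0 : 0 < A := by rw [hA_def]; positivity
  have hA1 : A ≤ 1 := by
    rw [hA_def, div_le_one (by positivity)]
    apply mul_le_mul (by linarith) (Real.sqrt_le_sqrt (by linarith)) hst0.le (by linarith)
  have hkey : (t+1)*√(t+1) ≤ (t+3)*√t := by
    have h := Real.sqrt_le_sqrt (show (t+1)^2*(t+1) ≤ (t+3)^2*t by nlinarith)
    rwa [Real.sqrt_mul (sq_nonneg _), Real.sqrt_mul (sq_nonneg _),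
      Real.sqrt_sq (by linarith), Real.sqrt_sq (by linarith)] at h
  have hA3 : 1 ≤ A*((t+3)/t) := by
    rw [hA_def, div_mul_div_comm, one_le_div (by positivity)]
    nlinarith [hkey, hst0, hst1]
  have h1A : 1 - A ≤ A*(3/t) := by
    have hexp : A*((t+3)/t) = A + A*(3/t) := by field_simp
    linarith [hexp ▸ hA3]
  have h4A : 1 ≤ 4*A := by
    have h43 : (t+3)/t ≤ 4 := by rw [div_le_iff₀ ht0]; linarith
    nlinarith [hA3, hA0]
  set E : ℝ := exp y with hE_def
  have hE : 0 < E := Real.exp_pos y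
  -- core inequality
  have hq1 : P * D (t+1) = A*E*(P * D t) := by rw [hratio]; ring
  have hq0nn : 0 ≤ P * D t := le_of_lt (mul_pos hP0 (hD0 t ht0))
  have hEq0 : 0 ≤ E*(P*D t) := le_of_lt (mul_pos hE (mul_pos hP0 (hD0 t ht0)))
  have core : |P * D (t+1) - P * D t|
      ≤ (3/t)*(P*D (t+1)) + 4*(|y| * (P*D (t+1))) + |y| * (P*D t) := by
    rw [hq1, show A*E*(P*D t) - P*D t = (A*E-1)*(P*D t) by ring, abs_mul,
      abs_of_nonneg hq0nn]
    have h1 : |A*E-1| ≤ (1-A)*E + |y| * (E+1) := by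
      have ha : |A*E - E| = (1-A)*E := by
        rw [show A*E-E = -((1-A)*E) by ring, abs_neg,
          abs_of_nonneg (by nlinarith : (0:ℝ) ≤ (1-A)*E)]
      have hb : |E - 1| ≤ |y| * (E+1) := by
        rw [hE_def]; exact abs_exp_sub_one_le y
      calc |A*E-1| ≤ |A*E-E| + |E-1| := by
            have := abs_sub_le (A*E) E 1; simpa using this
        _ ≤ (1-A)*E + |y| * (E+1) := by rw [ha]; linarith
    calc |A*E-1| * (P*D t) ≤ ((1-A)*E + |y| * (E+1))*(P*D t) :=
          mul_le_mul_of_nonneg_right h1 hq0nn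
      _ = (1-A)*(E*(P*D t)) + |y| * (E*(P*D t)) + |y| * (P*D t) := by ring
      _ ≤ (3/t)*(A*E*(P*D t)) + 4*(|y| * (A*E*(P*D t))) + |y| * (P*D t) := by
          have hstep1 : (1-A)*(E*(P*D t)) ≤ (3/t)*(A*E*(P*D t)) := by
            calc (1-A)*(E*(P*D t)) ≤ (A*(3/t))*(E*(P*D t)) :=
                  mul_le_mul_of_nonneg_right h1A hEq0
              _ = (3/t)*(A*E*(P*D t)) := by ring
          have hstep2 : |y| * (E*(P*D t)) ≤ 4*(|y| * (A*E*(P*D t))) := by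
            calc |y| * (E*(P*D t)) = 1*(|y| * (E*(P*D t))) := by ring
              _ ≤ (4*A)*(|y| * (E*(P*D t))) := mul_le_mul_of_nonneg_right h4A
                  (mul_nonneg (abs_nonneg y) hEq0)
              _ = 4*(|y| * (A*E*(P*D t))) := by ring
          linarith
  -- majorant bound for P * D s
  have hDb : ∀ s, 1 ≤ s → P * D s
      ≤ (4*π*(4*π*s)^(-(3:ℝ)/2)) * ((r/2) * exp (-(r-2*s)^2/(4*s))) := by
    intro s hs1
    have hs0' : (0:ℝ) < s := by linarith
    have hsinh_le : Real.sinh r ≤ exp r / 2 := by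
      rw [Real.sinh_eq]
      have := Real.exp_pos (-r)
      linarith
    have hexp2 : exp (-s) * exp (-r^2/(4*s)) * exp r = exp (-(r-2*s)^2/(4*s)) := by
      rw [← Real.exp_add, ← Real.exp_add]
      congr 1
      field_simp
      ring
    have hκ : (0:ℝ) < (4*π*s)^(-(3:ℝ)/2) := Real.rpow_pos_of_pos (by positivity) _
    calc P * D s
        = (4*π*(4*π*s)^(-(3:ℝ)/2)) * (Real.sinh r * (r * (exp (-s)*exp (-r^2/(4*s))))) := by
          rw [hP_def, hD_def]; ring
      _ ≤ (4*π*(4*π*s)^(-(3:ℝ)/2)) * ((exp r / 2) * (r * (exp (-s)*exp (-r^2/(4*s))))) := by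
          apply mul_le_mul_of_nonneg_left _ (by positivity)
          apply mul_le_mul_of_nonneg_right hsinh_le (by positivity)
      _ = (4*π*(4*π*s)^(-(3:ℝ)/2)) * ((r/2) * (exp (-s) * exp (-r^2/(4*s)) * exp r)) := by
          ring
      _ = (4*π*(4*π*s)^(-(3:ℝ)/2)) * ((r/2) * exp (-(r-2*s)^2/(4*s))) := by rw [hexp2]
  -- |y| rewrite
  have hy_abs : |y| = |r^2 - 4*(t*(t+1))| / (4*(t*(t+1))) := by
    rw [hy_def, show r^2/(4*(t*(t+1))) - 1 = (r^2 - 4*(t*(t+1)))/(4*(t*(t+1))) by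
      field_simp, abs_div, abs_of_pos (by positivity : (0:ℝ) < 4*(t*(t+1)))]
  -- piece 1
  have hpiece1 : (3/t)*(P*D (t+1)) ≤ (3/t) * (4*π*(4*π*(t+1))^(-(3:ℝ)/2)) *
      gp (t+1) (2*(t+1)) (1/(4*√(t+1))) 0 (r - 2*(t+1)) := by
    have hm1 : (r/2) * exp (-(r-2*(t+1))^2/(4*(t+1)))
        ≤ gp (t+1) (2*(t+1)) (1/(4*√(t+1))) 0 (r - 2*(t+1)) := by
      unfold gp
      apply mul_le_mul_of_nonneg_right _ (Real.exp_nonneg _)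
      have := half_r_bound (show (1:ℝ) ≤ t+1 by linarith) hr
      linarith
    have hκ : (0:ℝ) ≤ 4*π*(4*π*(t+1))^(-(3:ℝ)/2) := by
      have := Real.rpow_pos_of_pos (show (0:ℝ) < 4*π*(t+1) by positivity) (-(3:ℝ)/2)
      positivity
    calc (3/t)*(P*D (t+1))
        ≤ (3/t)*((4*π*(4*π*(t+1))^(-(3:ℝ)/2)) * ((r/2) * exp (-(r-2*(t+1))^2/(4*(t+1))))) := by
          apply mul_le_mul_of_nonneg_left (hDb (t+1) (by linarith)) (by positivity)
      _ ≤ (3/t)*((4*π*(4*π*(t+1))^(-(3:ℝ)/2)) *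
            gp (t+1) (2*(t+1)) (1/(4*√(t+1))) 0 (r - 2*(t+1))) := by
          apply mul_le_mul_of_nonneg_left _ (by positivity)
          exact mul_le_mul_of_nonneg_left hm1 hκ
      _ = _ := by ring
  -- generic w piece
  have hpieceW : ∀ s, t ≤ s → s ≤ t+1 → |y| * (P*D s)
      ≤ ((4*π*(4*π*s)^(-(3:ℝ)/2))/(4*(t*(t+1)))) *
        gp s (19*s^2*√s) (13*s*√s) (1/(4*√s)) (r - 2*s) := by
    intro s hts hst
    have hs1 : 1 ≤ s := le_trans ht hts
    have hκ : (0:ℝ) ≤ 4*π*(4*π*s)^(-(3:ℝ)/2) := by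
      have := Real.rpow_pos_of_pos (show (0:ℝ) < 4*π*s by positivity) (-(3:ℝ)/2)
      positivity
    have hwb := w_bound ht hts hst hr
    calc |y| * (P*D s)
        ≤ |y| * ((4*π*(4*π*s)^(-(3:ℝ)/2)) * ((r/2) * exp (-(r-2*s)^2/(4*s)))) := by
          apply mul_le_mul_of_nonneg_left (hDb s hs1) (abs_nonneg y)
      _ = ((4*π*(4*π*s)^(-(3:ℝ)/2))/(4*(t*(t+1)))) *
            (((r/2) * |r^2 - 4*(t*(t+1))|) * exp (-(r-2*s)^2/(4*s))) := by
          rw [hy_abs]; field_simp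
      _ ≤ ((4*π*(4*π*s)^(-(3:ℝ)/2))/(4*(t*(t+1)))) *
            gp s (19*s^2*√s) (13*s*√s) (1/(4*√s)) (r - 2*s) := by
          apply mul_le_mul_of_nonneg_left _ (by positivity)
          unfold gp
          exact mul_le_mul_of_nonneg_right hwb (Real.exp_nonneg _)
  have hp2 := hpieceW (t+1) (by linarith) (by linarith)
  have hp3 := hpieceW t le_rfl (by linarith)
  calc |P * D (t+1) - P * D t|
      ≤ (3/t)*(P*D (t+1)) + 4*(|y| * (P*D (t+1))) + |y| * (P*D t) := core
    _ ≤ (3/t) * (4*π*(4*π*(t+1))^(-(3:ℝ)/2)) *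
          gp (t+1) (2*(t+1)) (1/(4*√(t+1))) 0 (r - 2*(t+1))
        + 4*(((4*π*(4*π*(t+1))^(-(3:ℝ)/2))/(4*(t*(t+1)))) *
          gp (t+1) (19*(t+1)^2*√(t+1)) (13*(t+1)*√(t+1)) (1/(4*√(t+1))) (r - 2*(t+1)))
        + ((4*π*(4*π*t)^(-(3:ℝ)/2))/(4*(t*(t+1)))) *
          gp t (19*t^2*√t) (13*t*√t) (1/(4*√t)) (r - 2*t) := by
        have h4 : 4*(|y| * (P*D (t+1))) ≤ 4*(((4*π*(4*π*(t+1))^(-(3:ℝ)/2))/(4*(t*(t+1)))) *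
          gp (t+1) (19*(t+1)^2*√(t+1)) (13*(t+1)*√(t+1)) (1/(4*√(t+1))) (r - 2*(t+1))) := by
          linarith
        linarith [hpiece1, hp3]
    _ = _ := by
        have htne : t ≠ 0 := ne_of_gt ht0
        have htne1 : t + 1 ≠ 0 := ne_of_gt hs0
        field_simp

lemma kap_val {s : ℝ} (hs : 0 < s) : (4*π*(4*π*s)^(-(3:ℝ)/2)) * (√π*√s) = 1/(2*s) := by
  rw [rpow_neg_three_div_two (by positivity)]
  have h1 : √(4*π*s) = 2*(√π*√s) := by
    rw [show 4*π*s = 4*(π*s) by ring, sqrt_four_mul (by positivity),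
      Real.sqrt_mul pi_nonneg]
  rw [h1]
  have hπ := Real.pi_pos
  have hsπ : (0:ℝ) < √π := Real.sqrt_pos.2 hπ
  have hss : (0:ℝ) < √s := Real.sqrt_pos.2 hs
  field_simp

set_option maxHeartbeats 1000000 in
lemma main_bound {t : ℝ} (ht : 1 ≤ t) :
    (∫ r in Set.Ioi (0:ℝ),
        4*π*(Real.sinh r)^2 * |hypHeatKernel r (t+1) - hypHeatKernel r t|)
      ≤ 200/√t := by
  have ht0 : (0:ℝ) < t := by linarith
  have hs0 : (0:ℝ) < t+1 := by linarith
  have hπ := Real.pi_pos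
  have hκ1 : (0:ℝ) < 4*π*(4*π*(t+1))^(-(3:ℝ)/2) := by
    have := Real.rpow_pos_of_pos (show (0:ℝ) < 4*π*(t+1) by positivity) (-(3:ℝ)/2)
    positivity
  have hκ0 : (0:ℝ) < 4*π*(4*π*t)^(-(3:ℝ)/2) := by
    have := Real.rpow_pos_of_pos (show (0:ℝ) < 4*π*t by positivity) (-(3:ℝ)/2)
    positivity
  have ha0 : (0:ℝ) < √t := Real.sqrt_pos.2 ht0
  have hb0 : (0:ℝ) < √(t+1) := Real.sqrt_pos.2 hs0
  -- integrability of the three majorant pieces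
  have i1 : Integrable (fun r : ℝ => (3/t) * (4*π*(4*π*(t+1))^(-(3:ℝ)/2)) *
      gp (t+1) (2*(t+1)) (1/(4*√(t+1))) 0 (r - 2*(t+1))) :=
    (gp_integrable_shift hs0 _ _ _ _).const_mul _
  have i2 : Integrable (fun r : ℝ => (4*π*(4*π*(t+1))^(-(3:ℝ)/2))/(t*(t+1)) *
      gp (t+1) (19*(t+1)^2*√(t+1)) (13*(t+1)*√(t+1)) (1/(4*√(t+1))) (r - 2*(t+1))) :=
    (gp_integrable_shift hs0 _ _ _ _).const_mul _
  have i3 : Integrable (fun r : ℝ => (4*π*(4*π*t)^(-(3:ℝ)/2))/(4*(t*(t+1))) *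
      gp t (19*t^2*√t) (13*t*√t) (1/(4*√t)) (r - 2*t)) :=
    (gp_integrable_shift ht0 _ _ _ _).const_mul _
  have i12 := i1.add i2
  have iH := i12.add i3
  have iH' : Integrable (fun r : ℝ =>
      (3/t) * (4*π*(4*π*(t+1))^(-(3:ℝ)/2)) *
        gp (t+1) (2*(t+1)) (1/(4*√(t+1))) 0 (r - 2*(t+1))
      + (4*π*(4*π*(t+1))^(-(3:ℝ)/2))/(t*(t+1)) *
        gp (t+1) (19*(t+1)^2*√(t+1)) (13*(t+1)*√(t+1)) (1/(4*√(t+1))) (r - 2*(t+1))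
      + (4*π*(4*π*t)^(-(3:ℝ)/2))/(4*(t*(t+1))) *
        gp t (19*t^2*√t) (13*t*√t) (1/(4*√t)) (r - 2*t)) := iH
  -- nonnegativity of the majorant
  have hHnn : ∀ r : ℝ, 0 ≤
      (3/t) * (4*π*(4*π*(t+1))^(-(3:ℝ)/2)) *
        gp (t+1) (2*(t+1)) (1/(4*√(t+1))) 0 (r - 2*(t+1))
      + (4*π*(4*π*(t+1))^(-(3:ℝ)/2))/(t*(t+1)) *
        gp (t+1) (19*(t+1)^2*√(t+1)) (13*(t+1)*√(t+1)) (1/(4*√(t+1))) (r - 2*(t+1))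
      + (4*π*(4*π*t)^(-(3:ℝ)/2))/(4*(t*(t+1))) *
        gp t (19*t^2*√t) (13*t*√t) (1/(4*√t)) (r - 2*t) := by
    intro r
    have g1 := gp_nonneg (show (0:ℝ) ≤ 2*(t+1) by linarith)
      (show (0:ℝ) ≤ 1/(4*√(t+1)) by positivity) le_rfl (r - 2*(t+1)) (s := t+1)
    have g2 := gp_nonneg (show (0:ℝ) ≤ 19*(t+1)^2*√(t+1) by positivity)
      (show (0:ℝ) ≤ 13*(t+1)*√(t+1) by positivity)
      (show (0:ℝ) ≤ 1/(4*√(t+1)) by positivity) (r - 2*(t+1)) (s := t+1)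
    have g3 := gp_nonneg (show (0:ℝ) ≤ 19*t^2*√t by positivity)
      (show (0:ℝ) ≤ 13*t*√t by positivity)
      (show (0:ℝ) ≤ 1/(4*√t) by positivity) (r - 2*t) (s := t)
    have hc1 : (0:ℝ) ≤ (3/t) * (4*π*(4*π*(t+1))^(-(3:ℝ)/2)) := by positivity
    have hc2 : (0:ℝ) ≤ (4*π*(4*π*(t+1))^(-(3:ℝ)/2))/(t*(t+1)) := by positivity
    have hc3 : (0:ℝ) ≤ (4*π*(4*π*t)^(-(3:ℝ)/2))/(4*(t*(t+1))) := by positivity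
    have := mul_nonneg hc1 g1
    have := mul_nonneg hc2 g2
    have := mul_nonneg hc3 g3
    linarith
  -- step 1 : compare with the majorant on (0, ∞)
  have step1 : (∫ r in Set.Ioi (0:ℝ),
      4*π*(Real.sinh r)^2 * |hypHeatKernel r (t+1) - hypHeatKernel r t|)
      ≤ ∫ r in Set.Ioi (0:ℝ),
      ((3/t) * (4*π*(4*π*(t+1))^(-(3:ℝ)/2)) *
        gp (t+1) (2*(t+1)) (1/(4*√(t+1))) 0 (r - 2*(t+1))
      + (4*π*(4*π*(t+1))^(-(3:ℝ)/2))/(t*(t+1)) *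
        gp (t+1) (19*(t+1)^2*√(t+1)) (13*(t+1)*√(t+1)) (1/(4*√(t+1))) (r - 2*(t+1))
      + (4*π*(4*π*t)^(-(3:ℝ)/2))/(4*(t*(t+1))) *
        gp t (19*t^2*√t) (13*t*√t) (1/(4*√t)) (r - 2*t)) := by
    apply integral_mono_of_nonneg
    · exact ae_of_all _ fun r => by positivity
    · exact iH'.integrableOn
    · refine (ae_restrict_iff' measurableSet_Ioi).2 (ae_of_all _ fun r hr => ?_)
      exact pointwise_main ht hr
  -- step 2 : extend to all of ℝ
  have step2 : (∫ r in Set.Ioi (0:ℝ),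
      ((3/t) * (4*π*(4*π*(t+1))^(-(3:ℝ)/2)) *
        gp (t+1) (2*(t+1)) (1/(4*√(t+1))) 0 (r - 2*(t+1))
      + (4*π*(4*π*(t+1))^(-(3:ℝ)/2))/(t*(t+1)) *
        gp (t+1) (19*(t+1)^2*√(t+1)) (13*(t+1)*√(t+1)) (1/(4*√(t+1))) (r - 2*(t+1))
      + (4*π*(4*π*t)^(-(3:ℝ)/2))/(4*(t*(t+1))) *
        gp t (19*t^2*√t) (13*t*√t) (1/(4*√t)) (r - 2*t)))
      ≤ ∫ r : ℝ,
      ((3/t) * (4*π*(4*π*(t+1))^(-(3:ℝ)/2)) *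
        gp (t+1) (2*(t+1)) (1/(4*√(t+1))) 0 (r - 2*(t+1))
      + (4*π*(4*π*(t+1))^(-(3:ℝ)/2))/(t*(t+1)) *
        gp (t+1) (19*(t+1)^2*√(t+1)) (13*(t+1)*√(t+1)) (1/(4*√(t+1))) (r - 2*(t+1))
      + (4*π*(4*π*t)^(-(3:ℝ)/2))/(4*(t*(t+1))) *
        gp t (19*t^2*√t) (13*t*√t) (1/(4*√t)) (r - 2*t)) :=
    setIntegral_le_integral iH' (ae_of_all _ fun r => hHnn r)
  -- step 3 : compute the full-space integral
  have e1 := integral_add (μ := volume)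
    (f := fun r : ℝ => (3/t) * (4*π*(4*π*(t+1))^(-(3:ℝ)/2)) *
        gp (t+1) (2*(t+1)) (1/(4*√(t+1))) 0 (r - 2*(t+1))
      + (4*π*(4*π*(t+1))^(-(3:ℝ)/2))/(t*(t+1)) *
        gp (t+1) (19*(t+1)^2*√(t+1)) (13*(t+1)*√(t+1)) (1/(4*√(t+1))) (r - 2*(t+1)))
    (g := fun r : ℝ => (4*π*(4*π*t)^(-(3:ℝ)/2))/(4*(t*(t+1))) *
        gp t (19*t^2*√t) (13*t*√t) (1/(4*√t)) (r - 2*t)) i12 i3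
  have e2 := integral_add (μ := volume)
    (f := fun r : ℝ => (3/t) * (4*π*(4*π*(t+1))^(-(3:ℝ)/2)) *
        gp (t+1) (2*(t+1)) (1/(4*√(t+1))) 0 (r - 2*(t+1)))
    (g := fun r : ℝ => (4*π*(4*π*(t+1))^(-(3:ℝ)/2))/(t*(t+1)) *
        gp (t+1) (19*(t+1)^2*√(t+1)) (13*(t+1)*√(t+1)) (1/(4*√(t+1))) (r - 2*(t+1)))
    i1 i2
  have step3 : (∫ r : ℝ,
      ((3/t) * (4*π*(4*π*(t+1))^(-(3:ℝ)/2)) *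
        gp (t+1) (2*(t+1)) (1/(4*√(t+1))) 0 (r - 2*(t+1))
      + (4*π*(4*π*(t+1))^(-(3:ℝ)/2))/(t*(t+1)) *
        gp (t+1) (19*(t+1)^2*√(t+1)) (13*(t+1)*√(t+1)) (1/(4*√(t+1))) (r - 2*(t+1))
      + (4*π*(4*π*t)^(-(3:ℝ)/2))/(4*(t*(t+1))) *
        gp t (19*t^2*√t) (13*t*√t) (1/(4*√t)) (r - 2*t)))
      = (3/t) * (4*π*(4*π*(t+1))^(-(3:ℝ)/2)) *
          (√π*√(t+1)*(2*(2*(t+1)) + 4*(1/(4*√(t+1)))*(t+1) + 24*0*(t+1)^2))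
      + (4*π*(4*π*(t+1))^(-(3:ℝ)/2))/(t*(t+1)) *
          (√π*√(t+1)*(2*(19*(t+1)^2*√(t+1)) + 4*(13*(t+1)*√(t+1))*(t+1)
            + 24*(1/(4*√(t+1)))*(t+1)^2))
      + (4*π*(4*π*t)^(-(3:ℝ)/2))/(4*(t*(t+1))) *
          (√π*√t*(2*(19*t^2*√t) + 4*(13*t*√t)*t + 24*(1/(4*√t))*t^2)) := by
    rw [e1, e2, integral_const_mul, integral_const_mul, integral_const_mul,
      gp_integral_shift hs0, gp_integral_shift hs0, gp_integral_shift ht0]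
  -- step 4 : numeric bound
  have hκ1v : (4*π*(4*π*(t+1))^(-(3:ℝ)/2)) * (√π*√(t+1)) = 1/(2*(t+1)) := kap_val hs0
  have hκ0v : (4*π*(4*π*t)^(-(3:ℝ)/2)) * (√π*√t) = 1/(2*t) := kap_val ht0
  have haa : √t*√t = t := Real.mul_self_sqrt ht0.le
  have hbb : √(t+1)*√(t+1) = t+1 := Real.mul_self_sqrt hs0.le
  have ha1 : (1:ℝ) ≤ √t := by
    have h := Real.sqrt_le_sqrt (show (1:ℝ) ≤ t by linarith)
    rwa [Real.sqrt_one] at h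
  have hb1 : (1:ℝ) ≤ √(t+1) := by
    have h := Real.sqrt_le_sqrt (show (1:ℝ) ≤ t+1 by linarith)
    rwa [Real.sqrt_one] at h
  have hba : √(t+1) ≤ 2*√t := by
    have h := Real.sqrt_le_sqrt (show t+1 ≤ 4*t by linarith)
    rwa [sqrt_four_mul ht0.le] at h
  have step4 : (3/t) * (4*π*(4*π*(t+1))^(-(3:ℝ)/2)) *
          (√π*√(t+1)*(2*(2*(t+1)) + 4*(1/(4*√(t+1)))*(t+1) + 24*0*(t+1)^2))
      + (4*π*(4*π*(t+1))^(-(3:ℝ)/2))/(t*(t+1)) *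
          (√π*√(t+1)*(2*(19*(t+1)^2*√(t+1)) + 4*(13*(t+1)*√(t+1))*(t+1)
            + 24*(1/(4*√(t+1)))*(t+1)^2))
      + (4*π*(4*π*t)^(-(3:ℝ)/2))/(4*(t*(t+1))) *
          (√π*√t*(2*(19*t^2*√t) + 4*(13*t*√t)*t + 24*(1/(4*√t))*t^2))
      ≤ 200/√t := by
    set K1 := 4*π*(4*π*(t+1))^(-(3:ℝ)/2) with hK1
    set K0 := 4*π*(4*π*t)^(-(3:ℝ)/2) with hK0
    set a := √t with ha_def
    set b := √(t+1) with hb_def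
    -- rewrite the three terms pulling out K * (√π * √s)
    have hrw : K1 * (√π*b) = 1/(2*(t+1)) := hκ1v
    have hrw0 : K0 * (√π*a) = 1/(2*t) := hκ0v
    have hEq : (3/t) * K1 * (√π*b*(2*(2*(t+1)) + 4*(1/(4*b))*(t+1) + 24*0*(t+1)^2))
        + K1/(t*(t+1)) * (√π*b*(2*(19*(t+1)^2*b) + 4*(13*(t+1)*b)*(t+1)
            + 24*(1/(4*b))*(t+1)^2))
        + K0/(4*(t*(t+1))) * (√π*a*(2*(19*t^2*a) + 4*(13*t*a)*t + 24*(1/(4*a))*t^2))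
        = (3/t) * ((K1*(√π*b)) * (2*(2*(t+1)) + 4*(1/(4*b))*(t+1)))
        + (1/(t*(t+1))) * ((K1*(√π*b)) * (2*(19*(t+1)^2*b) + 4*(13*(t+1)*b)*(t+1)
            + 24*(1/(4*b))*(t+1)^2))
        + (1/(4*(t*(t+1)))) * ((K0*(√π*a)) * (2*(19*t^2*a) + 4*(13*t*a)*t
            + 24*(1/(4*a))*t^2)) := by
      ring
    rw [hEq, hrw, hrw0]
    -- now a pure algebra/inequality problem
    have ha0' : 0 < a := ha0
    have hb0' : 0 < b := hb0
    have hbb' : b*b = a*a+1 := by rw [haa]; exact hbb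
    have haa' : a*a = t := haa
    have hba' : b ≤ 2*a := hba
    have ha1' : (1:ℝ) ≤ a := ha1
    have hb1' : (1:ℝ) ≤ b := hb1
    clear_value K1 K0 a b
    clear hrw hrw0 hEq hκ1v hκ0v haa hbb ha1 hb1 hba hK1 hK0 ha_def hb_def
    rw [show t = a*a from haa'.symm]
    have hane : a ≠ 0 := ne_of_gt ha0'
    have hbne : b ≠ 0 := ne_of_gt hb0'
    have h1b : 1/b ≤ 1 := by rw [div_le_one hb0']; exact hb1'
    have h6b : 6/b ≤ 6 := by rw [div_le_iff₀ hb0']; linarith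
    have hT1 : 3*(4 + 1/b)/(2*(a*a)) ≤ 8/a := by
      rw [div_le_div_iff₀ (by positivity) ha0']
      nlinarith [h1b, ha1', ha0']
    have hT2 : (90*b + 6/b)/(2*(a*a)) ≤ 100/a := by
      rw [div_le_div_iff₀ (by positivity) ha0']
      nlinarith [hba', h6b, ha1', ha0']
    have hT3 : (90*(a*a)+6)/(8*(a*(a*a+1))) ≤ 15/a := by
      rw [div_le_div_iff₀ (by positivity) ha0']
      nlinarith [ha1', ha0']
    have hsum : (8:ℝ)/a + 100/a + 15/a ≤ 200/a := by
      rw [← add_div, ← add_div, div_le_div_iff₀ ha0' ha0']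
      nlinarith [ha0']
    calc 3 / (a * a) * (1 / (2 * (a * a + 1)) *
          (2 * (2 * (a * a + 1)) + 4 * (1 / (4 * b)) * (a * a + 1)))
        + 1 / (a * a * (a * a + 1)) * (1 / (2 * (a * a + 1)) *
          (2 * (19 * (a * a + 1) ^ 2 * b) + 4 * (13 * (a * a + 1) * b) * (a * a + 1)
            + 24 * (1 / (4 * b)) * (a * a + 1) ^ 2))
        + 1 / (4 * (a * a * (a * a + 1))) * (1 / (2 * (a * a)) *
          (2 * (19 * (a * a) ^ 2 * a) + 4 * (13 * (a * a) * a) * (a * a)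
            + 24 * (1 / (4 * a)) * (a * a) ^ 2))
        = 3*(4 + 1/b)/(2*(a*a)) + (90*b + 6/b)/(2*(a*a))
          + (90*(a*a)+6)/(8*(a*(a*a+1))) := by
          field_simp
          ring
      _ ≤ 8/a + 100/a + 15/a := by
          exact add_le_add (add_le_add hT1 hT2) hT3
      _ ≤ 200/a := hsum
  calc (∫ r in Set.Ioi (0:ℝ),
        4*π*(Real.sinh r)^2 * |hypHeatKernel r (t+1) - hypHeatKernel r t|)
      ≤ _ := step1
    _ ≤ _ := step2
    _ = _ := step3
    _ ≤ 200/√t := step4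
end auxiliary

/-- The fundamental solution on `ℍ³` and its unit time delay converge to each other in
`L¹(ℍ³)`: `∫₀^∞ 4π (sinh r)² |G(r,t+1) - G(r,t)| dr → 0` as `t → ∞`. -/
theorem hypHeatKernel_time_delay_L1_convergence :
    Tendsto (fun t : ℝ =>
        ∫ r in Set.Ioi (0 : ℝ),
          4 * π * (Real.sinh r) ^ 2 * |hypHeatKernel r (t + 1) - hypHeatKernel r t|)
      atTop (nhds 0) := by
  have hsqrt : Tendsto (fun t : ℝ => √t) atTop atTop := by
    simp_rw [Real.sqrt_eq_rpow]
    exact tendsto_rpow_atTop (by norm_num)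
  have hg : Tendsto (fun t : ℝ => 200/√t) atTop (nhds 0) :=
    tendsto_const_nhds.div_atTop hsqrt
  apply squeeze_zero' ?_ ?_ hg
  · filter_upwards with t
    apply MeasureTheory.integral_nonneg
    intro r
    positivity
  · filter_upwards [eventually_ge_atTop (1:ℝ)] with t ht
    exact main_bound ht
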